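/- Let $X_1,\dots,X_n$ be i.i.d. random variables in a measurable space $S$, let $f: S^d \to \mathbb{R}$ with $f(X_1,\dots,X_d)$ integrable and mean $\mu$. Define $f_j(x) := \mathbb{E} f(X_1,\dots,X_{j-1},x,X_{j+1},\dots,X_d) - \mu$ and $f_*(x_1,\dots,x_d) := f(x_1,\dots,x_d) - \mu - \sum_{j=1}^d f_j(x_j)$. Then the U-statistic $U_n(f) := \sum_{1 \le i_1 < \dots < i_d \le n} f(X_{i_1},\dots,X_{i_d})$ decomposes as $U_n(f) = \binom{n}{d}\mu + \sum_{j=1}^d \sum_{i=1}^n \binom{i-1}{j-1}\binom{n-i}{d-j} f_j(X_i) + U_n(f_*)$. -/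

import Mathlib

open MeasureTheory ProbabilityTheory Finset

/-- The asymmetric U-statistic `U_n(f) = ∑_{i_1 < ⋯ < i_d ≤ n} f(X_{i_1},…,X_{i_d})`
(indices `0`-based: the sum is over `d`-subsets of `{0,…,n-1}` listed increasingly). -/
noncomputable def Ustat {S : Type*} (d n : ℕ) (f : (Fin d → S) → ℝ) (X : ℕ → S) : ℝ :=
  ∑ s ∈ ((Finset.range n).powersetCard d).attach,
    f (fun k => X (s.1.orderIsoOfFin (Finset.mem_powersetCard.mp s.2).2 k))

/-- The mean `μ = E f(X_1,…,X_d)`. -/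
noncomputable def meanF {Ω S : Type*} [MeasurableSpace Ω] (μ : Measure Ω) (d : ℕ)
    (f : (Fin d → S) → ℝ) (X : ℕ → Ω → S) : ℝ :=
  ∫ ω, f (fun k => X k ω) ∂μ

/-- The first-order projection `f_j(x) = E f(X_1,…,X_{j-1},x,X_{j+1},…,X_d) - μ`. -/
noncomputable def proj {Ω S : Type*} [MeasurableSpace Ω] (μ : Measure Ω) (d : ℕ)
    (f : (Fin d → S) → ℝ) (X : ℕ → Ω → S) (j : Fin d) (x : S) : ℝ :=
  (∫ ω, f (Function.update (fun k => X k ω) j x) ∂μ) - meanF μ d f X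

/-- The number of elements of `s` less than `s.orderEmbOfFin h j` is `j`. -/
lemma filter_lt_orderEmb (s : Finset ℕ) {d : ℕ} (h : s.card = d) (j : Fin d) :
    (s.filter (· < s.orderEmbOfFin h j)).card = j := by
  have : s.filter (· < s.orderEmbOfFin h j)
      = (Finset.Iio j).image (fun k => s.orderEmbOfFin h k) := by
    ext x
    simp only [mem_filter, mem_image, mem_Iio]
    constructor
    · rintro ⟨hx, hlt⟩
      obtain ⟨k, rfl⟩ : ∃ k, s.orderEmbOfFin h k = x :=
        Set.ext_iff.mp (Finset.range_orderEmbOfFin s h) x |>.mpr hx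
      exact ⟨k, (s.orderEmbOfFin h).lt_iff_lt.mp hlt, rfl⟩
    · rintro ⟨k, hk, rfl⟩
      exact ⟨Finset.orderEmbOfFin_mem s h k, (s.orderEmbOfFin h).lt_iff_lt.mpr hk⟩
  rw [this, Finset.card_image_of_injective _ (s.orderEmbOfFin h).injective, Fin.card_Iio]

/-- Characterization of the `j`-th element of a finset. -/
lemma orderEmb_eq_iff (s : Finset ℕ) {d : ℕ} (h : s.card = d) (j : Fin d) (i : ℕ) :
    s.orderEmbOfFin h j = i ↔ i ∈ s ∧ (s.filter (· < i)).card = j := by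
  constructor
  · rintro rfl
    exact ⟨Finset.orderEmbOfFin_mem s h j, filter_lt_orderEmb s h j⟩
  · rintro ⟨hi, hc⟩
    obtain ⟨k, rfl⟩ : ∃ k, s.orderEmbOfFin h k = i :=
      Set.ext_iff.mp (Finset.range_orderEmbOfFin s h) i |>.mpr hi
    congr 1
    have := filter_lt_orderEmb s h k
    rw [hc] at this
    exact Fin.ext this.symm.symm

/-- The number of `d`-subsets of `{0,…,n-1}` whose `j`-th element is `i`. -/
lemma count_lemma {d : ℕ} (n : ℕ) (j : Fin d) (i : ℕ) (hi : i < n) :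
    (((Finset.range n).powersetCard d).filter
        (fun s => i ∈ s ∧ (s.filter (· < i)).card = j.val)).card
      = Nat.choose i j.val * Nat.choose (n - 1 - i) (d - 1 - j.val) := by
  have hcard : (((Finset.range i).powersetCard j.val) ×ˢ
      ((Finset.Ico (i+1) n).powersetCard (d - 1 - j.val))).card
      = Nat.choose i j.val * Nat.choose (n - 1 - i) (d - 1 - j.val) := by
    rw [Finset.card_product, Finset.card_powersetCard, Finset.card_powersetCard,
      Finset.card_range, Nat.card_Ico]
    congr 2
    omega
  rw [← hcard]
  apply Finset.card_nbij' (fun s => (s.filter (· < i), s.filter (i < ·)))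
    (fun p => insert i (p.1 ∪ p.2))
  · intro s hs
    simp only [Finset.mem_filter, Finset.mem_powersetCard, Finset.mem_coe] at hs ⊢
    obtain ⟨⟨hsub, hc⟩, hmem, hflt⟩ := hs
    have hsplit : s = (s.filter (· < i)) ∪ {i} ∪ (s.filter (i < ·)) := by
      ext x
      simp only [Finset.mem_union, Finset.mem_filter, Finset.mem_singleton]
      constructor
      · intro hx
        rcases lt_trichotomy x i with h | h | h
        · exact Or.inl (Or.inl ⟨hx, h⟩)
        · exact Or.inl (Or.inr h)
        · exact Or.inr ⟨hx, h⟩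
      · rintro ((⟨h, _⟩ | rfl) | ⟨h, _⟩) <;> [exact h; exact hmem; exact h]
    have hdisj1 : Disjoint ((s.filter (· < i)) ∪ {i}) (s.filter (i < ·)) := by
      refine Finset.disjoint_left.mpr fun x hx1 hx2 => ?_
      simp only [Finset.mem_union, Finset.mem_filter, Finset.mem_singleton] at hx1 hx2
      rcases hx1 with (⟨_, h⟩ | rfl) <;> omega
    have hdisj2 : Disjoint (s.filter (· < i)) ({i} : Finset ℕ) := by
      refine Finset.disjoint_left.mpr fun x hx1 hx2 => ?_
      simp only [Finset.mem_filter, Finset.mem_singleton] at hx1 hx2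
      omega
    have hcards : d = j.val + 1 + (s.filter (i < ·)).card := by
      conv_lhs => rw [← hc, hsplit]
      rw [Finset.card_union_of_disjoint hdisj1,
        Finset.card_union_of_disjoint hdisj2, hflt, Finset.card_singleton]
    refine Finset.mem_product.mpr ⟨Finset.mem_powersetCard.mpr ⟨?_, hflt⟩,
      Finset.mem_powersetCard.mpr ⟨?_,
        show (s.filter (i < ·)).card = d - 1 - j.val by omega⟩⟩
    · intro x hx
      simp only [Finset.mem_filter] at hx
      exact Finset.mem_range.mpr hx.2
    · intro x hx
      simp only [Finset.mem_filter] at hx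
      have := Finset.mem_range.mp (hsub hx.1)
      exact Finset.mem_Ico.mpr ⟨by omega, this⟩
  · rintro ⟨a, b⟩ hp
    simp only [Finset.mem_coe, Finset.mem_product, Finset.mem_powersetCard] at hp
    obtain ⟨⟨ha, hac⟩, hb, hbc⟩ := hp
    have hane : ∀ x ∈ a, x < i := fun x hx => Finset.mem_range.mp (ha hx)
    have hbne : ∀ x ∈ b, i < x ∧ x < n := fun x hx => by
      have := Finset.mem_Ico.mp (hb hx); omega
    simp only [Finset.mem_coe, Finset.mem_filter, Finset.mem_powersetCard]
    have hfa : (insert i (a ∪ b)).filter (· < i) = a := by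
      ext x
      simp only [Finset.mem_filter, Finset.mem_insert, Finset.mem_union]
      constructor
      · rintro ⟨(rfl | h | h), hlt⟩
        · omega
        · exact h
        · exact absurd hlt (by have := hbne x h; omega)
      · intro hx; exact ⟨Or.inr (Or.inl hx), hane x hx⟩
    have hmemi : i ∈ insert i (a ∪ b) := Finset.mem_insert_self _ _
    have hcardi : (insert i (a ∪ b)).card = d := by
      have hd1 : Disjoint a b := by
        simp only [Finset.disjoint_left]
        intro x hx hx'
        have := hane x hx; have := hbne x hx'; omega
      have hni : i ∉ a ∪ b := by
        simp only [Finset.mem_union]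
        rintro (h | h)
        · have := hane i h; omega
        · have := hbne i h; omega
      rw [Finset.card_insert_of_notMem hni, Finset.card_union_of_disjoint hd1, hac, hbc]
      have := j.isLt
      omega
    refine ⟨⟨?_, hcardi⟩, hmemi, by rw [hfa, hac]⟩
    intro x hx
    simp only [Finset.mem_insert, Finset.mem_union] at hx
    rcases hx with rfl | h | h
    · exact Finset.mem_range.mpr hi
    · exact Finset.mem_range.mpr (by have := hane x h; omega)
    · exact Finset.mem_range.mpr (hbne x h).2
  · intro s hs
    simp only [Finset.mem_coe, Finset.mem_filter, Finset.mem_powersetCard] at hs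
    obtain ⟨⟨hsub, hc⟩, hmem, _⟩ := hs
    ext x
    simp only [Finset.mem_insert, Finset.mem_union, Finset.mem_filter]
    constructor
    · rintro (rfl | ⟨h, _⟩ | ⟨h, _⟩) <;> [exact hmem; exact h; exact h]
    · intro hx
      rcases lt_trichotomy x i with h | h | h
      · exact Or.inr (Or.inl ⟨hx, h⟩)
      · exact Or.inl h
      · exact Or.inr (Or.inr ⟨hx, h⟩)
  · rintro ⟨a, b⟩ hp
    simp only [Finset.mem_coe, Finset.mem_product, Finset.mem_powersetCard] at hp
    obtain ⟨⟨ha, _⟩, hb, _⟩ := hp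
    have hane : ∀ x ∈ a, x < i := fun x hx => Finset.mem_range.mp (ha hx)
    have hbne : ∀ x ∈ b, i < x := fun x hx => (Finset.mem_Ico.mp (hb hx)).1
    simp only [Prod.mk.injEq]
    constructor
    · ext x
      simp only [Finset.mem_filter, Finset.mem_insert, Finset.mem_union]
      constructor
      · rintro ⟨(rfl | h | h), hlt⟩
        · omega
        · exact h
        · exact absurd hlt (by have := hbne x h; omega)
      · intro hx; exact ⟨Or.inr (Or.inl hx), hane x hx⟩
    · ext x
      simp only [Finset.mem_filter, Finset.mem_insert, Finset.mem_union]
      constructor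
      · rintro ⟨(rfl | h | h), hlt⟩
        · omega
        · exact absurd hlt (by have := hane x h; omega)
        · exact h
      · intro hx; exact ⟨Or.inr (Or.inr hx), hbne x hx⟩

/-- The `j`-th element, as a proof-free function. -/
noncomputable def eFun {d : ℕ} (s : Finset ℕ) (j : Fin d) : ℕ :=
  if h : s.card = d then s.orderEmbOfFin h j else 0

/-- The key combinatorial rearrangement: summing `g` at the `j`-th element over all
`d`-subsets of `{0,…,n-1}` groups as a weighted single sum. -/
lemma key_sum {d : ℕ} (n : ℕ) (g : ℕ → Fin d → ℝ) :
    ∑ s ∈ ((Finset.range n).powersetCard d).attach,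
        ∑ j : Fin d, g (s.1.orderEmbOfFin (Finset.mem_powersetCard.mp s.2).2 j) j
      = ∑ j : Fin d, ∑ i ∈ Finset.range n,
          ((Nat.choose i j.val * Nat.choose (n - 1 - i) (d - 1 - j.val) : ℕ) : ℝ) * g i j := by
  rw [Finset.sum_comm]
  refine Finset.sum_congr rfl fun j _ => ?_
  have hmemrange : ∀ (s : {x // x ∈ (Finset.range n).powersetCard d}),
      s.1.orderEmbOfFin (Finset.mem_powersetCard.mp s.2).2 j ∈ Finset.range n :=
    fun s => (Finset.mem_powersetCard.mp s.2).1
      (Finset.orderEmbOfFin_mem _ _ j)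
  calc ∑ s ∈ ((Finset.range n).powersetCard d).attach,
        g (s.1.orderEmbOfFin (Finset.mem_powersetCard.mp s.2).2 j) j
      = ∑ s ∈ ((Finset.range n).powersetCard d).attach,
          ∑ i ∈ Finset.range n,
            if i = eFun s.1 j then g i j else 0 := by
        refine Finset.sum_congr rfl fun s _ => ?_
        rw [Finset.sum_ite_eq' (Finset.range n) (eFun s.1 j) (fun i => g i j)]
        have he : eFun s.1 j = s.1.orderEmbOfFin (Finset.mem_powersetCard.mp s.2).2 j := by
          unfold eFun
          rw [dif_pos (Finset.mem_powersetCard.mp s.2).2]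
        rw [he, if_pos (hmemrange s)]
    _ = ∑ i ∈ Finset.range n, ∑ s ∈ ((Finset.range n).powersetCard d).attach,
          if i = eFun s.1 j then g i j else 0 := Finset.sum_comm
    _ = ∑ i ∈ Finset.range n, ∑ s ∈ (Finset.range n).powersetCard d,
          if i = eFun s j then g i j else 0 := by
        refine Finset.sum_congr rfl fun i _ => ?_
        exact Finset.sum_attach ((Finset.range n).powersetCard d)
          (fun s => if i = eFun s j then g i j else 0)
    _ = ∑ i ∈ Finset.range n,
          ((Nat.choose i j.val * Nat.choose (n - 1 - i) (d - 1 - j.val) : ℕ) : ℝ) * g i j := by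
        refine Finset.sum_congr rfl fun i hi => ?_
        rw [← Finset.sum_filter, Finset.sum_const, nsmul_eq_mul]
        congr 1
        rw [← count_lemma n j i (Finset.mem_range.mp hi)]
        congr 1
        have heq : ((Finset.range n).powersetCard d).filter (fun s => i = eFun s j)
            = ((Finset.range n).powersetCard d).filter
                (fun s => i ∈ s ∧ (s.filter (· < i)).card = j.val) := by
          apply Finset.filter_congr
          intro s hs
          have hc : s.card = d := (Finset.mem_powersetCard.mp hs).2
          rw [show eFun s j = s.orderEmbOfFin hc j from dif_pos hc]
          rw [← orderEmb_eq_iff s hc j i]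
          exact eq_comm
        rw [heq]

/-- Hoeffding's decomposition for asymmetric U-statistics:
`U_n(f) = C(n,d) μ + ∑_{j=1}^d ∑_{i=1}^n C(i-1,j-1) C(n-i,d-j) f_j(X_i) + U_n(f_*)`,
where `f_*(x_1,…,x_d) = f(x_1,…,x_d) - μ - ∑_j f_j(x_j)`. -/
theorem hoeffding_decomposition {Ω S : Type*} [MeasurableSpace Ω] [MeasurableSpace S]
    (μ : Measure Ω) [IsProbabilityMeasure μ] (X : ℕ → Ω → S)
    (hmeas : ∀ i, Measurable (X i))
    (hindep : iIndepFun X μ)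
    (hident : ∀ i, IdentDistrib (X i) (X 0) μ μ)
    (d n : ℕ) (hd : 1 ≤ d) (f : (Fin d → S) → ℝ)
    (hint : Integrable (fun ω => f (fun k => X k ω)) μ) :
    ∀ ω : Ω,
      Ustat d n f (fun i => X i ω) =
        (Nat.choose n d : ℝ) * meanF μ d f X
          + ∑ j : Fin d, ∑ i ∈ Finset.range n,
              ((Nat.choose i j.val * Nat.choose (n - 1 - i) (d - 1 - j.val) : ℕ) : ℝ)
                * proj μ d f X j (X i ω)
          + Ustat d n
              (fun x => f x - meanF μ d f X - ∑ j : Fin d, proj μ d f X j (x j))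
              (fun i => X i ω) := by
  intro ω
  unfold Ustat
  simp only [Finset.coe_orderIsoOfFin_apply, Finset.sum_sub_distrib]
  have hcard : (((Finset.range n).powersetCard d).attach.card : ℝ) = (Nat.choose n d : ℝ) := by
    rw [Finset.card_attach, Finset.card_powersetCard, Finset.card_range]
  have hkey := key_sum n (fun i j => proj μ d f X j (X i ω))
  rw [Finset.sum_const, nsmul_eq_mul, hcard, hkey]
  ring
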